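/- Let z_n > 0 be defined by z_n^{-2} Φ(-z_n) = 1/(4n). Then z_n² > log n for all integers n ≥ 2. -/

import Mathlib

open MeasureTheory Set

noncomputable def stdPDF (x : ℝ) : ℝ := Real.exp (-x^2/2) / Real.sqrt (2*Real.pi)

noncomputable def stdCDF (t : ℝ) : ℝ := ∫ x in Set.Iic t, stdPDF x

lemma stdPDF_pos (x : ℝ) : 0 < stdPDF x := by
  unfold stdPDF
  have : 0 < Real.sqrt (2*Real.pi) := Real.sqrt_pos.mpr (by positivity)
  positivity

lemma stdPDF_neg (x : ℝ) : stdPDF (-x) = stdPDF x := by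
  unfold stdPDF; ring_nf

lemma integrable_stdPDF : Integrable stdPDF := by
  have h := integrable_exp_neg_mul_sq (by norm_num : (0:ℝ) < 1/2)
  have he : stdPDF = fun x => Real.exp (-(1/2) * x^2) / Real.sqrt (2*Real.pi) := by
    funext x; unfold stdPDF; ring_nf
  rw [he]
  exact h.div_const _

lemma continuous_stdPDF : Continuous stdPDF := by
  unfold stdPDF
  exact (Real.continuous_exp.comp (by continuity)).div_const _

lemma hasDerivAt_stdPDF (x : ℝ) : HasDerivAt stdPDF (-(x * stdPDF x)) x := by
  have h1 : HasDerivAt (fun y : ℝ => -y^2/2) (-x) x := by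
    have h := ((hasDerivAt_pow 2 x).neg).div_const 2
    norm_num at h
    refine h.congr_deriv ?_
    ring
  have h2 := (h1.exp).div_const (Real.sqrt (2*Real.pi))
  refine HasDerivAt.congr_deriv (f := stdPDF) h2 ?_
  unfold stdPDF; ring

noncomputable def millsFun (x : ℝ) : ℝ := stdPDF x * (x / (1+x^2))
noncomputable def millsDer (x : ℝ) : ℝ := stdPDF x * ((1 - 2*x^2 - x^4) / (1+x^2)^2)

lemma hasDerivAt_millsFun (x : ℝ) : HasDerivAt millsFun (millsDer x) x := by
  have hd : (1:ℝ)+x^2 ≠ 0 := by positivity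
  have hden : HasDerivAt (fun y : ℝ => 1 + y^2) (2*x) x := by
    simpa using (hasDerivAt_pow 2 x).const_add 1
  have h1 : HasDerivAt (fun y : ℝ => y/(1+y^2))
      ((1*(1+x^2) - x*(2*x))/(1+x^2)^2) x :=
    (hasDerivAt_id x).div hden hd
  have h2 := (hasDerivAt_stdPDF x).mul h1
  refine HasDerivAt.congr_deriv (f := millsFun) h2 ?_
  unfold millsDer
  field_simp
  ring

lemma millsDer_bound (x : ℝ) : |millsDer x| ≤ stdPDF x := by
  have hφ := (stdPDF_pos x).le
  have hb : (0:ℝ) < (1+x^2)^2 := by positivity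
  have hq1 : (1 - 2*x^2 - x^4) / (1+x^2)^2 ≤ 1 := by
    rw [div_le_one hb]; nlinarith [sq_nonneg x, sq_nonneg (x^2)]
  have hq2 : (-1:ℝ) ≤ (1 - 2*x^2 - x^4) / (1+x^2)^2 := by
    rw [le_div_iff₀ hb]; nlinarith [sq_nonneg x, sq_nonneg (x^2)]
  rw [abs_le]
  unfold millsDer
  constructor
  · nlinarith
  · nlinarith

lemma continuous_millsDer : Continuous millsDer := by
  unfold millsDer
  refine continuous_stdPDF.mul (Continuous.div (by continuity) (by continuity) ?_)
  intro x; positivity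

lemma integrable_millsDer : Integrable millsDer := by
  refine integrable_stdPDF.mono' continuous_millsDer.aestronglyMeasurable ?_
  filter_upwards with x
  simpa [Real.norm_eq_abs] using millsDer_bound x

lemma tendsto_stdPDF : Filter.Tendsto stdPDF Filter.atTop (nhds 0) := by
  have h1 : Filter.Tendsto (fun x:ℝ => x^2/2) Filter.atTop Filter.atTop :=
    (Filter.tendsto_pow_atTop (by norm_num)).atTop_div_const (by norm_num)
  have h2 := (Real.tendsto_exp_neg_atTop_nhds_zero).comp h1
  have h3 := h2.div_const (Real.sqrt (2*Real.pi))
  have he : stdPDF = fun x => Real.exp (-(x^2/2)) / Real.sqrt (2*Real.pi) := by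
    funext x; unfold stdPDF; ring_nf
  rw [he]
  simpa [Function.comp] using h3

lemma tendsto_millsFun : Filter.Tendsto millsFun Filter.atTop (nhds 0) := by
  refine tendsto_of_tendsto_of_tendsto_of_le_of_le' tendsto_const_nhds tendsto_stdPDF ?_ ?_
  · filter_upwards [Filter.eventually_ge_atTop (0:ℝ)] with x hx
    exact mul_nonneg (stdPDF_pos x).le (div_nonneg hx (by positivity))
  · filter_upwards [Filter.eventually_ge_atTop (0:ℝ)] with x hx
    have h1 : x/(1+x^2) ≤ 1 := by
      rw [div_le_one (by positivity)]; nlinarith [sq_nonneg (x-1)]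
    calc millsFun x ≤ stdPDF x * 1 :=
          mul_le_mul_of_nonneg_left h1 (stdPDF_pos x).le
      _ = stdPDF x := mul_one _

lemma mills_lb (s : ℝ) : stdPDF s * (s/(1+s^2)) ≤ stdCDF (-s) := by
  have key : ∫ x in Ioi s, millsDer x = 0 - millsFun s :=
    integral_Ioi_of_hasDerivAt_of_tendsto' (fun x _ => hasDerivAt_millsFun x)
      integrable_millsDer.integrableOn tendsto_millsFun
  have h1 : millsFun s = ∫ x in Ioi s, (-millsDer x) := by
    rw [integral_neg, key]; ring
  have h2 : (∫ x in Ioi s, (-millsDer x)) ≤ ∫ x in Ioi s, stdPDF x := by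
    refine setIntegral_mono_on integrable_millsDer.neg.integrableOn
      integrable_stdPDF.integrableOn measurableSet_Ioi ?_
    intro x _
    have := (abs_le.mp (millsDer_bound x)).1
    linarith
  have h3 : (∫ x in Ioi s, stdPDF x) = stdCDF (-s) := by
    unfold stdCDF
    rw [← integral_comp_neg_Ioi]
    simp only [stdPDF_neg]
  calc stdPDF s * (s/(1+s^2)) = millsFun s := rfl
    _ ≤ ∫ x in Ioi s, stdPDF x := by rw [h1] at *; exact h2
    _ = stdCDF (-s) := h3

lemma keyPoly (t : ℝ) (ht : 0 < t) : 2*Real.pi*t*(1+t)^2 < 16*Real.exp t := by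
  have hpi : Real.pi < 3.15 := Real.pi_lt_d2
  have hs : ∑ i ∈ Finset.range 10, t ^ i / (Nat.factorial i : ℝ) ≤ Real.exp t :=
    Real.sum_le_exp_of_nonneg ht.le 10
  have hs' : 1 + t + t^2/2 + t^3/6 + t^4/24 + t^5/120 + t^6/720 + t^7/5040
      + t^8/40320 + t^9/362880 ≤ Real.exp t := by
    refine le_trans (le_of_eq ?_) hs
    simp [Finset.sum_range_succ, Nat.factorial]
  nlinarith [sq_nonneg (t - 2.4), mul_nonneg ht.le (sq_nonneg (t - 2.4)),
    mul_nonneg (mul_nonneg ht.le ht.le) (sq_nonneg (t - 2.4)),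
    mul_nonneg (mul_nonneg (mul_nonneg ht.le ht.le) ht.le) (sq_nonneg (t - 2.4)),
    mul_nonneg (mul_nonneg (mul_nonneg (mul_nonneg ht.le ht.le) ht.le) ht.le) (sq_nonneg (t - 2.4)),
    pow_pos ht 5, pow_pos ht 7, pow_pos ht 9, Real.pi_gt_three]

/-- If z_n > 0 solves z⁻² Φ(-z) = 1/(4n), then z_n² > log n for n ≥ 2. -/
theorem stmt19 (n : ℕ) (hn : 2 ≤ n) (z : ℝ) (hz : 0 < z)
    (heq : z⁻¹^2 * stdCDF (-z) = 1/(4*(n:ℝ))) :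
    Real.log n < z^2 := by
  by_contra hcon
  push_neg at hcon
  set L := Real.log n with hLdef
  have hn2 : (2:ℝ) ≤ (n:ℝ) := by exact_mod_cast hn
  have hnpos : (0:ℝ) < (n:ℝ) := by linarith
  have hLpos : 0 < L := Real.log_pos (by linarith)
  have hexpL : Real.exp L = (n:ℝ) := Real.exp_log hnpos
  have hz2 : (0:ℝ) < z^2 := by positivity
  have hC : stdCDF (-z) = z^2 / (4*(n:ℝ)) := by
    have hzne : z ≠ 0 := ne_of_gt hz
    field_simp at heq ⊢
    linarith [heq]
  have hm := mills_lb z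
  rw [hC] at hm
  -- hm : stdPDF z * (z/(1+z^2)) ≤ z^2/(4n)
  set s := Real.sqrt (2*Real.pi) with hsdef
  have hspos : 0 < s := Real.sqrt_pos.mpr (by positivity)
  have hssq : s * s = 2*Real.pi := Real.mul_self_sqrt (by positivity)
  have hden : (0:ℝ) < 1 + z^2 := by positivity
  -- step 1 : 4 n exp(-z^2/2) ≤ s z (1+z^2)
  have h1 : 4*(n:ℝ)*Real.exp (-z^2/2) ≤ s * z * (1+z^2) := by
    have : Real.exp (-z^2/2) / s * (z/(1+z^2)) ≤ z^2/(4*(n:ℝ)) := hm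
    rw [div_mul_div_comm, div_le_div_iff₀ (by positivity) (by positivity)] at this
    -- exp(-z^2/2) * z * (4n) ≤ z^2 * (s*(1+z^2))
    nlinarith [Real.exp_pos (-z^2/2)]
  -- step 2 : bound exp and z by L
  have hzL : z ≤ Real.sqrt L := by
    rw [← Real.sqrt_sq hz.le]
    exact Real.sqrt_le_sqrt hcon
  have hsqL : Real.sqrt L * Real.sqrt L = L := Real.mul_self_sqrt hLpos.le
  have hsqLpos : 0 < Real.sqrt L := Real.sqrt_pos.mpr hLpos
  have hexpmono : Real.exp (-L/2) ≤ Real.exp (-z^2/2) :=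
    Real.exp_le_exp.mpr (by linarith)
  have h2 : 4*(n:ℝ)*Real.exp (-L/2) ≤ s * Real.sqrt L * (1+L) := by
    have hz3 : z * (1+z^2) ≤ Real.sqrt L * (1+L) := by
      have h1z : 1 + z^2 ≤ 1 + L := by linarith
      nlinarith
    have := mul_le_mul_of_nonneg_left hexpmono (by positivity : (0:ℝ) ≤ 4*(n:ℝ))
    calc 4*(n:ℝ)*Real.exp (-L/2) ≤ 4*(n:ℝ)*Real.exp (-z^2/2) := this
      _ ≤ s * z * (1+z^2) := h1
      _ ≤ s * (Real.sqrt L * (1+L)) := by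
          rw [mul_assoc]
          exact mul_le_mul_of_nonneg_left hz3 hspos.le
      _ = s * Real.sqrt L * (1+L) := by ring
  -- step 3 : rewrite 4 n exp(-L/2) = 4 exp(L/2)
  have hhalf : Real.exp (L/2) * Real.exp (L/2) = (n:ℝ) := by
    rw [← Real.exp_add]; rw [show L/2 + L/2 = L by ring]; exact hexpL
  have hne : (n:ℝ) * Real.exp (-L/2) = Real.exp (L/2) := by
    rw [← hhalf, mul_assoc, ← Real.exp_add]
    rw [show L/2 + -L/2 = 0 by ring, Real.exp_zero, mul_one]
  have h3 : 4*Real.exp (L/2) ≤ s * Real.sqrt L * (1+L) := by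
    calc 4*Real.exp (L/2) = 4*(n:ℝ)*Real.exp (-L/2) := by rw [mul_assoc, hne]
      _ ≤ _ := h2
  -- step 4 : square
  have h4 : 16 * Real.exp L ≤ 2*Real.pi * L * (1+L)^2 := by
    have hlhs : 0 ≤ 4*Real.exp (L/2) := by positivity
    have := mul_self_le_mul_self hlhs h3
    calc 16 * Real.exp L = (4*Real.exp (L/2)) * (4*Real.exp (L/2)) := by
          rw [show L = L/2 + L/2 by ring, Real.exp_add]; ring
      _ ≤ (s * Real.sqrt L * (1+L)) * (s * Real.sqrt L * (1+L)) := this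
      _ = (s*s) * (Real.sqrt L * Real.sqrt L) * (1+L)^2 := by ring
      _ = 2*Real.pi * L * (1+L)^2 := by rw [hssq, hsqL]
  exact absurd h4 (not_le.mpr (keyPoly L hLpos))
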